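/- Let X be a chi-square random variable with 2t degrees of freedom (t a positive integer) and define its exponential order ξ = −log X / log SNR, i.e., X = SNR^{−ξ}. Then for fixed ξ₀ > 0, lim_{SNR→∞} log Prob(X ≤ SNR^{−ξ₀}) / log SNR = −t·ξ₀, and for ξ₀ < 0, Prob(X ≥ SNR^{−ξ₀}) decays faster than any polynomial in SNR. -/
import Mathlib


open Filter MeasureTheory Set

private lemma pow_div_fact_le_exp {y : ℝ} (hy : 0 ≤ y) (n : ℕ) :
    y ^ n / n.factorial ≤ Real.exp y :=
  le_trans (Finset.single_le_sum (f := fun i => y ^ i / i.factorial)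
      (fun i _ => by positivity) (Finset.self_mem_range_succ n))
    (Real.sum_le_exp_of_nonneg hy (n + 1))

private lemma key_pow_exp (n : ℕ) {x : ℝ} (hx : 0 ≤ x) :
    x ^ n * Real.exp (-x / 2) ≤ ((n.factorial : ℝ) * 4 ^ n) * Real.exp (-x / 4) := by
  have h1 : x ^ n ≤ ((n.factorial : ℝ) * 4 ^ n) * Real.exp (x / 4) := by
    have := pow_div_fact_le_exp (y := x / 4) (by linarith) n
    have h2 : (x / 4) ^ n = x ^ n / 4 ^ n := div_pow x 4 n
    rw [h2] at this
    have hfn : (0:ℝ) < n.factorial := by positivity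
    rw [div_div] at this
    calc x ^ n = (4:ℝ) ^ n * n.factorial * (x ^ n / (4 ^ n * n.factorial)) := by
          field_simp
      _ ≤ (4:ℝ) ^ n * n.factorial * Real.exp (x / 4) := by
          apply mul_le_mul_of_nonneg_left this (by positivity)
      _ = ((n.factorial : ℝ) * 4 ^ n) * Real.exp (x / 4) := by ring
  calc x ^ n * Real.exp (-x / 2)
      ≤ (((n.factorial : ℝ) * 4 ^ n) * Real.exp (x / 4)) * Real.exp (-x / 2) := by
        apply mul_le_mul_of_nonneg_right h1 (Real.exp_nonneg _)
    _ = ((n.factorial : ℝ) * 4 ^ n) * Real.exp (-x / 4) := by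
        rw [mul_assoc, ← Real.exp_add]; ring_nf

private lemma exp_tail_integral (M : ℝ) :
    ∫ x in Set.Ioi M, Real.exp (-x / 4) = 4 * Real.exp (-M / 4) := by
  have h := MeasureTheory.integral_comp_mul_left_Ioi (fun y => Real.exp (-y)) M
    (b := (4:ℝ)⁻¹) (by norm_num)
  have he : (fun x : ℝ => Real.exp (-x / 4)) = fun x => Real.exp (-((4:ℝ)⁻¹ * x)) := by
    funext x; congr 1; ring
  rw [he, h, integral_exp_neg_Ioi, smul_eq_mul,
    show -((4:ℝ)⁻¹ * M) = -M/4 by ring]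
  norm_num

private lemma exp_tail_integrable (M : ℝ) :
    IntegrableOn (fun x : ℝ => Real.exp (-x / 4)) (Set.Ioi M) := by
  have h := exp_neg_integrableOn_Ioi M (b := (4:ℝ)⁻¹) (by norm_num)
  refine h.congr_fun (fun x _ => ?_) measurableSet_Ioi
  congr 1; ring

/-- Exponential order of a chi-square variable with `2t` degrees of freedom
(density `x^{t−1}e^{−x/2}/(2^t (t−1)!)`): for `ξ₀ > 0`,
`log P(X ≤ SNR^{−ξ₀}) / log SNR → −t·ξ₀`; for `ξ₀ < 0`, `P(X ≥ SNR^{−ξ₀})`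
decays faster than any polynomial in `SNR`. -/
theorem stmt17 (t : ℕ) (ht : 0 < t) (ξ₀ : ℝ) :
    (0 < ξ₀ →
      Tendsto (fun SNR : ℝ =>
          Real.log (∫ x in Set.Ioc (0 : ℝ) (SNR ^ (-ξ₀)),
              x ^ (t - 1) * Real.exp (-x / 2)
                / (2 ^ t * (Nat.factorial (t - 1)))) / Real.log SNR)
        atTop (nhds (-(t * ξ₀))))
    ∧ (ξ₀ < 0 → ∀ p : ℝ,
      Tendsto (fun SNR : ℝ =>
          (∫ x in Set.Ioi (SNR ^ (-ξ₀)),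
              x ^ (t - 1) * Real.exp (-x / 2)
                / (2 ^ t * (Nat.factorial (t - 1)))) * SNR ^ p)
        atTop (nhds 0)) := by
  have hCpos : (0:ℝ) < 2 ^ t * (Nat.factorial (t - 1)) := by positivity
  set C : ℝ := 2 ^ t * (Nat.factorial (t - 1)) with hC
  have hfc : Continuous fun x : ℝ => x ^ (t - 1) * Real.exp (-x / 2) / C := by
    fun_prop
  constructor
  · -- Part 1
    intro hξ
    -- auxiliary limit : c / log SNR → 0
    have hloginv : Tendsto (fun SNR : ℝ => (Real.log SNR)⁻¹) atTop (nhds 0) :=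
      Real.tendsto_log_atTop.inv_tendsto_atTop
    have hub : Tendsto (fun SNR : ℝ => -(t * ξ₀) + (-Real.log (t * C)) * (Real.log SNR)⁻¹)
        atTop (nhds (-(t * ξ₀))) := by
      have := (hloginv.const_mul (-Real.log (t * C))).const_add (-(t * ξ₀))
      simpa using this
    have hlb : Tendsto (fun SNR : ℝ =>
        -(t * ξ₀) + (-(1/2) - Real.log (t * C)) * (Real.log SNR)⁻¹)
        atTop (nhds (-(t * ξ₀))) := by
      have := (hloginv.const_mul (-(1/2) - Real.log (t * C))).const_add (-(t * ξ₀))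
      simpa using this
    refine tendsto_of_tendsto_of_tendsto_of_le_of_le' hlb hub ?_ ?_
    all_goals
      filter_upwards [eventually_gt_atTop (1:ℝ)] with SNR hS
      have hS0 : (0:ℝ) < SNR := by linarith
      have hlS : 0 < Real.log SNR := Real.log_pos hS
      set ε : ℝ := SNR ^ (-ξ₀) with hε
      have hε0 : 0 < ε := Real.rpow_pos_of_pos hS0 _
      have hε1 : ε ≤ 1 := Real.rpow_le_one_of_one_le_of_nonpos hS.le (by linarith)
      have hlogε : Real.log ε = -ξ₀ * Real.log SNR := Real.log_rpow hS0 _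
      have htpos : (0:ℝ) < (t:ℝ) := by exact_mod_cast ht
      -- integrability
      have hint : IntegrableOn (fun x : ℝ => x ^ (t - 1) * Real.exp (-x / 2) / C)
          (Set.Ioc 0 ε) := hfc.integrableOn_Ioc
      have hint_up : IntegrableOn (fun x : ℝ => x ^ (t - 1) / C) (Set.Ioc 0 ε) :=
        (continuous_pow (t-1) |>.div_const C).integrableOn_Ioc
      have hint_lo : IntegrableOn (fun x : ℝ => Real.exp (-(1/2)) * x ^ (t - 1) / C)
          (Set.Ioc 0 ε) := by
        have : Continuous fun x : ℝ => Real.exp (-(1/2)) * x ^ (t - 1) / C := by fun_prop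
        exact this.integrableOn_Ioc
      -- value of the monomial integral
      have hmono : (∫ x in Set.Ioc (0:ℝ) ε, x ^ (t - 1)) = ε ^ t / t := by
        rw [← intervalIntegral.integral_of_le hε0.le, integral_pow]
        have h1 : t - 1 + 1 = t := Nat.succ_pred_eq_of_pos ht
        have h2 : ((t - 1 : ℕ) : ℝ) + 1 = (t : ℝ) := by exact_mod_cast h1
        rw [h1, h2, zero_pow ht.ne', sub_zero]
      -- upper bound on the integral
      have hIu : (∫ x in Set.Ioc (0:ℝ) ε, x ^ (t - 1) * Real.exp (-x / 2) / C)
          ≤ ε ^ t / (t * C) := by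
        have := setIntegral_mono_on hint hint_up measurableSet_Ioc (fun x hx => by
          have hx0 : 0 ≤ x := hx.1.le
          have : Real.exp (-x / 2) ≤ 1 := Real.exp_le_one_iff.mpr (by linarith [hx.1])
          calc x ^ (t-1) * Real.exp (-x/2) / C ≤ x ^ (t-1) * 1 / C := by
                apply div_le_div_of_nonneg_right ?_ hCpos.le
                · exact mul_le_mul_of_nonneg_left this (by positivity)
            _ = x ^ (t-1) / C := by ring)
        calc (∫ x in Set.Ioc (0:ℝ) ε, x ^ (t - 1) * Real.exp (-x / 2) / C)
            ≤ ∫ x in Set.Ioc (0:ℝ) ε, x ^ (t - 1) / C := this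
          _ = (∫ x in Set.Ioc (0:ℝ) ε, x ^ (t - 1)) / C := integral_div C _
          _ = ε ^ t / (t * C) := by rw [hmono]; field_simp
      -- lower bound on the integral
      have hIl : Real.exp (-(1/2)) * ε ^ t / (t * C)
          ≤ (∫ x in Set.Ioc (0:ℝ) ε, x ^ (t - 1) * Real.exp (-x / 2) / C) := by
        have := setIntegral_mono_on hint_lo hint measurableSet_Ioc (fun x hx => by
          have hx0 : 0 ≤ x := hx.1.le
          have hxe : x ≤ 1 := le_trans hx.2 hε1
          have : Real.exp (-(1/2)) ≤ Real.exp (-x / 2) := by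
            apply Real.exp_le_exp.mpr; linarith
          apply div_le_div_of_nonneg_right ?_ hCpos.le
          rw [mul_comm (Real.exp (-(1/2)))]
          exact mul_le_mul_of_nonneg_left this (by positivity))
        calc Real.exp (-(1/2)) * ε ^ t / (t * C)
            = (∫ x in Set.Ioc (0:ℝ) ε, Real.exp (-(1/2)) * x ^ (t - 1) / C) := by
              simp only [mul_div_assoc, integral_const_mul]
              rw [show (fun x:ℝ => x ^ (t-1) / C) = fun x:ℝ => x ^ (t-1) / C from rfl]
              rw [show (∫ x in Set.Ioc (0:ℝ) ε, x ^ (t-1) / C)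
                  = (∫ x in Set.Ioc (0:ℝ) ε, x ^ (t-1)) / C from integral_div C _, hmono]
              field_simp
          _ ≤ _ := this
      have hIpos : 0 < (∫ x in Set.Ioc (0:ℝ) ε, x ^ (t - 1) * Real.exp (-x / 2) / C) :=
        lt_of_lt_of_le (by positivity) hIl
      have hlogu : Real.log (ε ^ t / (t * C)) = t * (-ξ₀ * Real.log SNR) - Real.log (t * C) := by
        rw [Real.log_div (by positivity) (by positivity), Real.log_pow, hlogε]
      have hlogl : Real.log (Real.exp (-(1/2)) * ε ^ t / (t * C))
          = -(1/2) + t * (-ξ₀ * Real.log SNR) - Real.log (t * C) := by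
        rw [mul_div_assoc, Real.log_mul (Real.exp_ne_zero _) (by positivity),
          Real.log_exp, Real.log_div (by positivity) (by positivity), Real.log_pow, hlogε]
        ring
    · -- lower bound goal
      have h1 : Real.log (Real.exp (-(1/2)) * ε ^ t / (t * C))
          ≤ Real.log (∫ x in Set.Ioc (0:ℝ) ε, x ^ (t - 1) * Real.exp (-x / 2) / C) :=
        Real.log_le_log (by positivity) hIl
      rw [hlogl] at h1
      calc -(t * ξ₀) + (-(1/2) - Real.log (t * C)) * (Real.log SNR)⁻¹
          = (-(1/2) + t * (-ξ₀ * Real.log SNR) - Real.log (t * C)) / Real.log SNR := by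
            field_simp; ring
        _ ≤ _ := div_le_div_of_nonneg_right h1 hlS.le
    · -- upper bound goal
      have h1 : Real.log (∫ x in Set.Ioc (0:ℝ) ε, x ^ (t - 1) * Real.exp (-x / 2) / C)
          ≤ Real.log (ε ^ t / (t * C)) := Real.log_le_log hIpos hIu
      rw [hlogu] at h1
      calc Real.log (∫ x in Set.Ioc (0:ℝ) ε, x ^ (t - 1) * Real.exp (-x / 2) / C) / Real.log SNR
          ≤ (t * (-ξ₀ * Real.log SNR) - Real.log (t * C)) / Real.log SNR :=
            div_le_div_of_nonneg_right h1 hlS.le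
        _ = -(t * ξ₀) + (-Real.log (t * C)) * (Real.log SNR)⁻¹ := by field_simp; ring
  · -- Part 2
    intro hξ p
    set a : ℝ := -ξ₀ with ha'
    have ha : 0 < a := by simp [ha']; linarith
    set K : ℝ := (Nat.factorial (t - 1) : ℝ) * 4 ^ (t - 1) with hK
    have hKpos : 0 < K := by positivity
    -- the dominating function tends to 0
    have hdom : Tendsto (fun SNR : ℝ =>
        (4 * K / C) * ((SNR ^ a) ^ (p / a) * Real.exp (-(4⁻¹) * SNR ^ a)))
        atTop (nhds 0) := by
      have hbase := tendsto_rpow_mul_exp_neg_mul_atTop_nhds_zero (p / a) 4⁻¹ (by norm_num)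
      have hcomp := hbase.comp (tendsto_rpow_atTop ha)
      have := hcomp.const_mul (4 * K / C)
      simpa [Function.comp] using this
    refine tendsto_of_tendsto_of_tendsto_of_le_of_le' tendsto_const_nhds hdom ?_ ?_
    · -- nonnegativity
      filter_upwards [eventually_gt_atTop (1:ℝ)] with SNR hS
      have hS0 : (0:ℝ) < SNR := by linarith
      have hM : 0 < SNR ^ a := Real.rpow_pos_of_pos hS0 _
      apply mul_nonneg
      · apply setIntegral_nonneg measurableSet_Ioi
        intro x hx
        have hx0 : 0 ≤ x := le_trans hM.le (le_of_lt hx)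
        positivity
      · exact (Real.rpow_pos_of_pos hS0 p).le
    · -- upper bound
      filter_upwards [eventually_gt_atTop (1:ℝ)] with SNR hS
      have hS0 : (0:ℝ) < SNR := by linarith
      set M : ℝ := SNR ^ a with hMdef
      have hM : 0 < M := Real.rpow_pos_of_pos hS0 _
      have hg_int : IntegrableOn (fun x : ℝ => K / C * Real.exp (-x / 4)) (Set.Ioi M) :=
        (exp_tail_integrable M).const_mul _
      have hpt : ∀ x ∈ Set.Ioi M, x ^ (t - 1) * Real.exp (-x / 2) / C
          ≤ K / C * Real.exp (-x / 4) := by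
        intro x hx
        have hx0 : 0 ≤ x := le_trans hM.le (le_of_lt hx)
        have := key_pow_exp (t - 1) hx0
        rw [div_le_iff₀ hCpos]
        calc x ^ (t - 1) * Real.exp (-x / 2)
            ≤ K * Real.exp (-x / 4) := by rw [hK]; exact this
          _ = K / C * Real.exp (-x / 4) * C := by field_simp
      have hf_int : IntegrableOn (fun x : ℝ => x ^ (t - 1) * Real.exp (-x / 2) / C)
          (Set.Ioi M) := by
        refine Integrable.mono' hg_int hfc.aestronglyMeasurable.restrict ?_
        filter_upwards [ae_restrict_mem measurableSet_Ioi] with x hx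
        have hx0 : 0 ≤ x := le_trans hM.le (le_of_lt hx)
        rw [Real.norm_eq_abs, abs_of_nonneg (by positivity)]
        exact hpt x hx
      have hT : (∫ x in Set.Ioi M, x ^ (t - 1) * Real.exp (-x / 2) / C)
          ≤ K / C * (4 * Real.exp (-M / 4)) := by
        calc (∫ x in Set.Ioi M, x ^ (t - 1) * Real.exp (-x / 2) / C)
            ≤ ∫ x in Set.Ioi M, K / C * Real.exp (-x / 4) :=
              setIntegral_mono_on hf_int hg_int measurableSet_Ioi hpt
          _ = K / C * ∫ x in Set.Ioi M, Real.exp (-x / 4) := integral_const_mul _ _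
          _ = K / C * (4 * Real.exp (-M / 4)) := by rw [exp_tail_integral]
      have hrw : (4 * K / C) * ((SNR ^ a) ^ (p / a) * Real.exp (-(4⁻¹) * SNR ^ a))
          = K / C * (4 * Real.exp (-M / 4)) * SNR ^ p := by
        have h1 : (SNR ^ a) ^ (p / a) = SNR ^ p := by
          rw [← Real.rpow_mul hS0.le]
          congr 1
          field_simp
        rw [h1]
        have h2 : Real.exp (-(4⁻¹) * SNR ^ a) = Real.exp (-M / 4) := by
          congr 1; rw [hMdef]; ring
        rw [h2]; ring
      rw [hrw]
      exact mul_le_mul_of_nonneg_right hT (Real.rpow_pos_of_pos hS0 p).le
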